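/- Let G be a finite cyclic group (written additively), K a subgroup of Aut(G), and X a K-orbit in G that generates G. Suppose that for every x in X, the element -x lies in X + X := {a + a' : a, a' ∈ X}. Then there exists an integer b such that for every K-orbit Y in G, Y^{(b)} = Y and Y^{(-b-1)} = Y, where Y^{(m)} = {m·y : y ∈ Y}. Consequently, for every K-orbit Y, we have -y ∈ Y + Y for all y ∈ Y. -/

import Mathlib

open Pointwise
/-- `Y` is an orbit of the subgroup `K ≤ Aut(G)` acting naturally on `G`. -/
def IsKOrbit {G : Type*} [AddCommGroup G] (K : AddSubgroup (AddAut G)) (Y : Set G) : Prop :=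
  ∃ a : G, Y = {g | ∃ f ∈ K, f a = g}

private lemma orbit_smul {G : Type*} [AddCommGroup G] (K : AddSubgroup (AddAut G))
    (f : AddAut G) (hfK : f ∈ K) (m : ℤ) (hf : ∀ y : G, f y = m • y)
    (Y : Set G) (hY : IsKOrbit K Y) : (fun y => m • y) '' Y = Y := by
  obtain ⟨c, rfl⟩ := hY
  ext z
  constructor
  · rintro ⟨y, ⟨f', hf', rfl⟩, rfl⟩
    exact ⟨f + f', add_mem hfK hf', by simp [AddAut.add_apply, hf]⟩
  · rintro ⟨f', hf', rfl⟩
    refine ⟨(-f + f') c, ⟨-f + f', add_mem (neg_mem hfK) hf', rfl⟩, ?_⟩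
    have := hf ((-f + f') c)
    simp only [AddAut.add_apply] at this ⊢
    rw [← this]
    simp

theorem stmt4 {G : Type*} [AddCommGroup G] [Fintype G] (hG : IsAddCyclic G)
    (K : AddSubgroup (AddAut G)) (X : Set G) (hX : IsKOrbit K X)
    (hgen : AddSubgroup.closure X = ⊤)
    (hXX : ∀ x ∈ X, -x ∈ X + X) :
    ∃ b : ℤ,
      (∀ Y : Set G, IsKOrbit K Y →
        (fun y => b • y) '' Y = Y ∧ (fun y => (-b - 1) • y) '' Y = Y) ∧
      ∀ Y : Set G, IsKOrbit K Y → ∀ y ∈ Y, -y ∈ Y + Y := by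
  obtain ⟨a, rfl⟩ := hX
  have haX : a ∈ {g | ∃ f ∈ K, f a = g} := ⟨0, zero_mem K, rfl⟩
  obtain ⟨x1, hx1, x2, hx2, hsum⟩ := hXX a haX
  obtain ⟨f, hfK, rfl⟩ := hx1
  obtain ⟨g, hgK, rfl⟩ := hx2
  -- f and g act as integer multiplications
  obtain ⟨s, hs⟩ := AddMonoidHom.map_addCyclic (f : G ≃+ G).toAddMonoidHom
  obtain ⟨t, ht⟩ := AddMonoidHom.map_addCyclic (g : G ≃+ G).toAddMonoidHom
  have hs' : ∀ y : G, f y = s • y := hs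
  have ht' : ∀ y : G, g y = t • y := ht
  -- a generates G
  have hagen : ∀ y : G, ∃ k : ℤ, k • a = y := by
    intro y
    have : y ∈ AddSubgroup.zmultiples a := by
      have hle : AddSubgroup.closure {g | ∃ f ∈ K, f a = g} ≤ AddSubgroup.zmultiples a := by
        rw [AddSubgroup.closure_le]
        rintro z ⟨h, hhK, rfl⟩
        obtain ⟨m, hm⟩ := AddMonoidHom.map_addCyclic (h : G ≃+ G).toAddMonoidHom
        exact ⟨m, (hm a).symm⟩
      have := hgen ▸ hle
      exact this (AddSubgroup.mem_top y)
    exact this.imp fun k hk => hk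
  -- (s + t + 1) • a = 0 hence s + t + 1 kills everything
  have hkill : ∀ y : G, (s + t + 1) • y = 0 := by
    have ha0 : (s + t + 1) • a = 0 := by
      have : -a = s • a + t • a := by rw [← hs' a, ← ht' a]; exact hsum.symm
      have h2 : s • a + t • a + a = 0 := by rw [← this]; abel
      calc (s + t + 1) • a = s • a + t • a + a := by
            rw [add_smul, add_smul, one_smul]
          _ = 0 := h2
    intro y
    obtain ⟨k, rfl⟩ := hagen y
    rw [smul_comm, ha0, smul_zero]
  -- key: (-s-1) • y = t • y for all y
  have hts : ∀ y : G, (-s - 1) • y = t • y := by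
    intro y
    have := hkill y
    have h2 : (-s - 1) • y - t • y = -((s + t + 1) • y) := by
      rw [← neg_smul, ← sub_smul]
      congr 1
      ring
    rw [this, neg_zero] at h2
    linear_combination (norm := abel) h2
  refine ⟨s, fun Y hY => ?_, fun Y hY y hy => ?_⟩
  · constructor
    · exact orbit_smul K f hfK s hs' Y hY
    · have : (fun y : G => (-s - 1) • y) = fun y : G => t • y := funext hts
      rw [this]
      exact orbit_smul K g hgK t ht' Y hY
  · have h1 : s • y ∈ Y := by
      rw [← orbit_smul K f hfK s hs' Y hY]; exact ⟨y, hy, rfl⟩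
    have h2 : t • y ∈ Y := by
      rw [← orbit_smul K g hgK t ht' Y hY]; exact ⟨y, hy, rfl⟩
    have : -y = s • y + t • y := by
      rw [← hts y, ← add_smul, show s + (-s - 1) = -1 by ring, neg_one_smul]
    rw [this]
    exact Set.add_mem_add h1 h2
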